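/- Every COTS-path in a finite topological space contains, as a subset, a COTS-arc with the same start and end points, and this arc has cardinality at most that of the path. -/

import Mathlib

open Set

/-- The minimal open neighborhood of a point in a topological space. -/
def minOpenNhd {X : Type*} (t : TopologicalSpace X) (x : X) : Set X :=
  ⋂₀ {U : Set X | t.IsOpen U ∧ x ∈ U}

/-- The specialization-style preorder: `x ≤ y` iff `U_x ⊆ U_y`. -/
def specLE {X : Type*} (t : TopologicalSpace X) (x y : X) : Prop :=
  minOpenNhd t x ⊆ minOpenNhd t y

/-- Two points are adjacent if distinct and comparable in the specialization order. -/
def Adjacent {X : Type*} (t : TopologicalSpace X) (x y : X) : Prop :=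
  x ≠ y ∧ (specLE t x y ∨ specLE t y x)

/-- The adjacency set of a point. -/
def adjSet {X : Type*} (t : TopologicalSpace X) (x : X) : Set X := {y | Adjacent t x y}

/-- A COTS: a connected space in which every 3-point subset has a point separating
the other two. -/
def IsCOTS {X : Type*} (t : TopologicalSpace X) : Prop :=
  @ConnectedSpace X t ∧
    ∀ Y : Set X, Y.ncard = 3 →
      ∃ y ∈ Y, ∃ a ∈ Y \ {y}, ∃ b ∈ Y \ {y},
        @connectedComponentIn X t {y}ᶜ a ≠ @connectedComponentIn X t {y}ᶜ b

/-- An endpoint of a COTS: a point with at most one neighbor. -/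
def IsEndpoint {X : Type*} (t : TopologicalSpace X) (x : X) : Prop :=
  (adjSet t x).ncard ≤ 1

/-- A COTS-path: the continuous image of a finite COTS. -/
def IsCOTSPath {Y : Type*} (tY : TopologicalSpace Y) (P : Set Y) : Prop :=
  ∃ (C : Type) (tC : TopologicalSpace C), Finite C ∧ IsCOTS tC ∧
    ∃ f : C → Y, @Continuous C Y tC tY f ∧ Set.range f = P

/-- A COTS-path with prescribed start and end points. -/
def IsCOTSPathFromTo {Y : Type*} (tY : TopologicalSpace Y) (P : Set Y) (a b : Y) : Prop :=
  ∃ (C : Type) (tC : TopologicalSpace C), Finite C ∧ IsCOTS tC ∧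
    ∃ f : C → Y, @Continuous C Y tC tY f ∧ Set.range f = P ∧
      ∃ c₀ c₁ : C, IsEndpoint tC c₀ ∧ IsEndpoint tC c₁ ∧ f c₀ = a ∧ f c₁ = b

/-- A COTS-arc: the homeomorphic image of a finite COTS. -/
def IsCOTSArc {Y : Type*} (tY : TopologicalSpace Y) (A : Set Y) : Prop :=
  ∃ (C : Type) (tC : TopologicalSpace C), Finite C ∧ IsCOTS tC ∧
    ∃ f : C → Y, @Topology.IsEmbedding C Y tC tY f ∧ Set.range f = A

/-- A COTS-arc with prescribed endpoints. -/
def IsCOTSArcFromTo {Y : Type*} (tY : TopologicalSpace Y) (A : Set Y) (a b : Y) : Prop :=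
  ∃ (C : Type) (tC : TopologicalSpace C), Finite C ∧ IsCOTS tC ∧
    ∃ f : C → Y, @Topology.IsEmbedding C Y tC tY f ∧ Set.range f = A ∧
      ∃ c₀ c₁ : C, IsEndpoint tC c₀ ∧ IsEndpoint tC c₁ ∧ f c₀ = a ∧ f c₁ = b

/-- The COTS-distance: one less than the minimal cardinality of a COTS-arc
joining two points (`⊤` if there is no such arc). -/
noncomputable def cotsDist {X : Type*} (t : TopologicalSpace X) (x y : X) : ℕ∞ :=
  sInf {n : ℕ∞ | ∃ A : Set X, IsCOTSArcFromTo t A x y ∧ (A.ncard : ℕ∞) = n + 1}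

/-- The Khalimsky topology on ℤ. -/
def khal : TopologicalSpace ℤ :=
  TopologicalSpace.generateFrom
    {s : Set ℤ | ∃ n : ℤ, (Odd n ∧ s = {n}) ∨ (Even n ∧ s = {n - 1, n, n + 1})}

/-- The Khalimsky plane topology on ℤ × ℤ. -/
def khalPlane : TopologicalSpace (ℤ × ℤ) := @instTopologicalSpaceProd ℤ ℤ khal khal

/-- A point of the Khalimsky plane is pure if its coordinates have the same parity. -/
def IsPurePt (p : ℤ × ℤ) : Prop := (Even p.1 ∧ Even p.2) ∨ (Odd p.1 ∧ Odd p.2)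

/-- A digital Jordan curve: a finite set of at least 4 points such that removing
any point leaves a COTS-arc. -/
def IsJordanCurve {X : Type*} (t : TopologicalSpace X) (J : Set X) : Prop :=
  J.Finite ∧ 4 ≤ J.ncard ∧ ∀ j ∈ J, IsCOTSArc t (J \ {j})

/-- The interior of a digital Jordan curve in the Khalimsky plane: the union of the
finite (bounded) connected components of its complement. -/
def jInterior (J : Set (ℤ × ℤ)) : Set (ℤ × ℤ) :=
  ⋃₀ {S | ∃ p ∉ J, S = @connectedComponentIn _ khalPlane Jᶜ p ∧ S.Finite}

section Helpers
variable {X : Type*} [T : TopologicalSpace X]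

theorem mem_minOpenNhd_self (x : X) : x ∈ minOpenNhd T x :=
  Set.mem_sInter.mpr fun _ hU => hU.2

theorem specLE_refl' (x : X) : specLE T x x := fun _ h => h

theorem specLE_iff_mem {x y : X} : specLE T x y ↔ x ∈ minOpenNhd T y := by
  constructor
  · intro h; exact h (mem_minOpenNhd_self x)
  · intro h z hz
    exact Set.mem_sInter.mpr fun U hU =>
      Set.mem_sInter.mp hz U (show _ ∧ _ from ⟨hU.1, Set.mem_sInter.mp h U hU⟩)

theorem specLE_iff_forall {x y : X} :
    specLE T x y ↔ ∀ U : Set X, IsOpen U → y ∈ U → x ∈ U := by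
  rw [specLE_iff_mem]
  simp only [minOpenNhd, Set.mem_sInter, Set.mem_setOf_eq]
  exact ⟨fun h U h1 h2 => h U ⟨h1, h2⟩, fun h U hU => h U hU.1 hU.2⟩

theorem specLE_induced {Z : Type*} (f : Z → X) (z z' : Z) :
    specLE (TopologicalSpace.induced f T) z z' ↔ specLE T (f z) (f z') := by
  rw [@specLE_iff_forall Z (TopologicalSpace.induced f T), @specLE_iff_forall X T]
  constructor
  · intro h U hU hfz'
    exact h (f ⁻¹' U) (isOpen_induced_iff.mpr ⟨U, hU, rfl⟩) hfz'
  · intro h V hV hz'V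
    obtain ⟨U, hU, rfl⟩ := isOpen_induced_iff.mp hV
    exact h U hU hz'V

theorem specLE_map {Z : Type*} [TZ : TopologicalSpace Z] {f : X → Z} (hf : Continuous f)
    {x y : X} (h : specLE T x y) : specLE TZ (f x) (f y) := by
  rw [specLE_iff_forall] at h ⊢
  intro U hU hfy
  exact h _ (hU.preimage hf) hfy

theorem mem_connectedComponent_of_cmp {x y : X}
    (h : specLE T x y ∨ specLE T y x) : y ∈ connectedComponent x := by
  have key : ∀ u v : X, specLE T u v → v ∈ closure {u} := by
    intro u v huv
    rw [mem_closure_iff]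
    intro o ho hvo
    exact ⟨u, specLE_iff_forall.mp huv o ho hvo, rfl⟩
  cases h with
  | inl h =>
    exact (isPreconnected_singleton.closure).subset_connectedComponent
      (subset_closure rfl) (key x y h)
  | inr h =>
    have hx : x ∈ connectedComponent y :=
      (isPreconnected_singleton.closure).subset_connectedComponent
        (subset_closure rfl) (key y x h)
    rw [← connectedComponent_eq hx]
    exact mem_connectedComponent

variable [Finite X]

theorem isOpen_minOpenNhd (x : X) : IsOpen (minOpenNhd T x) :=
  Set.Finite.isOpen_sInter (Set.toFinite _) fun _ hU => hU.1

theorem isOpen_of_specLE_closed {S : Set X}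
    (h : ∀ x ∈ S, ∀ y, specLE T y x → y ∈ S) : IsOpen S := by
  have hS : S = ⋃ x ∈ S, minOpenNhd T x := by
    ext z
    simp only [Set.mem_iUnion, exists_prop]
    constructor
    · intro hz; exact ⟨z, hz, mem_minOpenNhd_self z⟩
    · rintro ⟨x, hx, hz⟩; exact h x hx z (specLE_iff_mem.mpr hz)
  rw [hS]
  exact isOpen_biUnion fun x _ => isOpen_minOpenNhd x

theorem isClopen_of_cmp_closed {S : Set X}
    (h : ∀ x ∈ S, ∀ y, (specLE T x y ∨ specLE T y x) → y ∈ S) : IsClopen S := by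
  constructor
  · rw [← isOpen_compl_iff]
    apply isOpen_of_specLE_closed
    intro x hx y hyx
    intro hyS
    exact hx (h y hyS x (Or.inl hyx))
  · apply isOpen_of_specLE_closed
    intro x hx y hyx
    exact h x hx y (Or.inr hyx)

end Helpers


/-- Every COTS-path in a finite space contains a COTS-arc with the same start and end
points, of cardinality at most that of the path. -/
theorem stmt5 {Y : Type*} [tY : TopologicalSpace Y] [Finite Y] (P : Set Y) (a b : Y)
    (h : IsCOTSPathFromTo tY P a b) :
    ∃ A ⊆ P, IsCOTSArcFromTo tY A a b ∧ A.ncard ≤ P.ncard := by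
  classical
  obtain ⟨C, tC, hCfin, ⟨hConn, -⟩, f, hfc, hrange, c₀, c₁, -, -, hfa, hfb⟩ := h
  haveI := hCfin
  letI := tC
  haveI : ConnectedSpace C := hConn
  have haP : a ∈ P := hrange ▸ ⟨c₀, hfa⟩
  -- a comparability walk from c₀ to c₁ in C
  have hwalkC : Relation.ReflTransGen (fun x y : C => specLE tC x y ∨ specLE tC y x) c₀ c₁ := by
    have hclopen : IsClopen {x : C |
        Relation.ReflTransGen (fun x y : C => specLE tC x y ∨ specLE tC y x) c₀ x} :=
      isClopen_of_cmp_closed fun x hx y hcmp => Relation.ReflTransGen.tail hx hcmp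
    have h2 := hclopen.eq_univ ⟨c₀, Relation.ReflTransGen.refl⟩
    have h3 : c₁ ∈ {x : C |
        Relation.ReflTransGen (fun x y : C => specLE tC x y ∨ specLE tC y x) c₀ x} := by
      rw [h2]; exact Set.mem_univ c₁
    exact h3
  -- push the walk to Y
  have hwalkY : Relation.ReflTransGen
      (fun u v : Y => u ∈ P ∧ v ∈ P ∧ (specLE tY u v ∨ specLE tY v u)) a b := by
    rw [← hfa, ← hfb]
    refine Relation.ReflTransGen.lift f (fun x y hxy =>
      ⟨hrange ▸ ⟨x, rfl⟩, hrange ▸ ⟨y, rfl⟩, ?_⟩) _ _ hwalkC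
    exact Or.imp (specLE_map hfc) (specLE_map hfc) hxy
  -- indexed walks
  have hex : ∃ n : ℕ, ∃ w : ℕ → Y, w 0 = a ∧ w n = b ∧
      (∀ i, i < n → (specLE tY (w i) (w (i+1)) ∨ specLE tY (w (i+1)) (w i))) ∧
      (∀ i, i ≤ n → w i ∈ P) := by
    have H : ∀ y : Y, Relation.ReflTransGen
        (fun u v : Y => u ∈ P ∧ v ∈ P ∧ (specLE tY u v ∨ specLE tY v u)) a y →
        ∃ n : ℕ, ∃ w : ℕ → Y, w 0 = a ∧ w n = y ∧
          (∀ i, i < n → (specLE tY (w i) (w (i+1)) ∨ specLE tY (w (i+1)) (w i))) ∧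
          (∀ i, i ≤ n → w i ∈ P) := by
      intro y hy
      induction hy with
      | refl =>
        exact ⟨0, fun _ => a, rfl, rfl, fun i hi => absurd hi (by omega), fun i _ => haP⟩
      | @tail m c ham hmc ih =>
        obtain ⟨n, w, hw0, hwn, hch, hm⟩ := ih
        refine ⟨n+1, fun k => if k ≤ n then w k else c, ?_, ?_, ?_, ?_⟩
        · show (if 0 ≤ n then w 0 else c) = a
          rw [if_pos (Nat.zero_le n)]; exact hw0
        · show (if n + 1 ≤ n then w (n+1) else c) = c
          rw [if_neg (by omega)]
        · intro k hk
          show (specLE tY (if k ≤ n then w k else c) (if k+1 ≤ n then w (k+1) else c) ∨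
            specLE tY (if k+1 ≤ n then w (k+1) else c) (if k ≤ n then w k else c))
          by_cases h1 : k + 1 ≤ n
          · rw [if_pos (by omega : k ≤ n), if_pos h1]
            exact hch k (by omega)
          · have hkn : k = n := by omega
            rw [if_pos (by omega : k ≤ n), if_neg h1, hkn, hwn]
            exact hmc.2.2
        · intro k hk
          show (if k ≤ n then w k else c) ∈ P
          by_cases h1 : k ≤ n
          · rw [if_pos h1]; exact hm k h1
          · rw [if_neg h1]; exact hmc.2.1
    exact H b hwalkY
  set n := Nat.find hex with hn
  obtain ⟨w, hw0, hwn, hch, hm⟩ := Nat.find_spec hex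
  have hmin : ∀ m, m < n → ¬ (∃ w : ℕ → Y, w 0 = a ∧ w m = b ∧
      (∀ i, i < m → (specLE tY (w i) (w (i+1)) ∨ specLE tY (w (i+1)) (w i))) ∧
      (∀ i, i ≤ m → w i ∈ P)) := fun m hm' => Nat.find_min hex hm'
  -- no chords
  have nochord : ∀ i j, i < j → j ≤ n →
      (specLE tY (w i) (w j) ∨ specLE tY (w j) (w i)) → j = i + 1 := by
    intro i j hij hjn hcmp
    by_contra hne
    have hd2 : i + 2 ≤ j := by omega
    set d := j - i - 1 with hd'
    apply hmin (n - d) (by omega)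
    set w' : ℕ → Y := fun k => if k ≤ i then w k else w (k + d) with hw'def
    have hw'k : ∀ k, w' k = if k ≤ i then w k else w (k + d) := fun _ => rfl
    refine ⟨w', ?_, ?_, ?_, ?_⟩
    · rw [hw'k, if_pos (Nat.zero_le i)]; exact hw0
    · rw [hw'k, if_neg (by omega)]
      rw [show n - d + d = n from by omega]; exact hwn
    · intro k hk
      rw [hw'k, hw'k]
      by_cases h1 : k + 1 ≤ i
      · rw [if_pos (by omega : k ≤ i), if_pos h1]
        exact hch k (by omega)
      · by_cases h2 : k ≤ i
        · have hk_eq : k = i := by omega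
          rw [if_pos h2, if_neg h1, show k + 1 + d = j from by omega, hk_eq]
          exact hcmp
        · rw [if_neg h2, if_neg (by omega)]
          rw [show k + 1 + d = k + d + 1 from by omega]
          exact hch (k + d) (by omega)
    · intro k hk
      rw [hw'k]
      by_cases h2 : k ≤ i
      · rw [if_pos h2]; exact hm k (by omega)
      · rw [if_neg h2]; exact hm (k + d) (by omega)
  -- injectivity
  have nodup : ∀ i j, i ≤ n → j ≤ n → w i = w j → i = j := by
    have key : ∀ i j, i < j → j ≤ n → w i ≠ w j := by
      intro i j hij hjn heq
      have hj : j = i + 1 := by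
        refine nochord i j hij hjn (Or.inl ?_)
        rw [heq]; exact specLE_refl' (w j)
      apply hmin (n - 1) (by omega)
      set w' : ℕ → Y := fun k => if k ≤ i then w k else w (k + 1) with hw'def
      have hw'k : ∀ k, w' k = if k ≤ i then w k else w (k + 1) := fun _ => rfl
      refine ⟨w', ?_, ?_, ?_, ?_⟩
      · rw [hw'k, if_pos (Nat.zero_le i)]; exact hw0
      · rw [hw'k]
        by_cases h1 : n - 1 ≤ i
        · have hin : i = n - 1 := by omega
          have hjn' : j = n := by omega
          rw [if_pos h1, show n - 1 = i from by omega, heq, hjn']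
          exact hwn
        · rw [if_neg h1, show n - 1 + 1 = n from by omega]; exact hwn
      · intro k hk
        rw [hw'k, hw'k]
        by_cases h1 : k + 1 ≤ i
        · rw [if_pos (by omega : k ≤ i), if_pos h1]
          exact hch k (by omega)
        · by_cases h2 : k ≤ i
          · have hk_eq : k = i := by omega
            rw [if_pos h2, if_neg h1, hk_eq, heq, hj]
            exact hch (i + 1) (by omega)
          · rw [if_neg h2, if_neg (by omega)]
            exact hch (k + 1) (by omega)
      · intro k hk
        rw [hw'k]
        by_cases h2 : k ≤ i
        · rw [if_pos h2]; exact hm k (by omega)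
        · rw [if_neg h2]; exact hm (k + 1) (by omega)
    intro i j hi hj heq
    rcases lt_trichotomy i j with h1 | h1 | h1
    · exact absurd heq (key i j h1 hj)
    · exact h1
    · exact absurd heq.symm (key j i h1 hi)
  -- the arc
  set g : Fin (n+1) → Y := fun p => w p.val with hgdef
  have hg : ∀ p : Fin (n+1), g p = w p.val := fun _ => rfl
  set tC' : TopologicalSpace (Fin (n+1)) := TopologicalSpace.induced g tY with htC'
  letI := tC'
  have hspec : ∀ p q : Fin (n+1), specLE tC' p q ↔ specLE tY (w p.val) (w q.val) :=
    fun p q => specLE_induced g p q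
  have hkey : ∀ p q : Fin (n+1), (specLE tC' p q ∨ specLE tC' q p) →
      (p.val = q.val ∨ p.val + 1 = q.val ∨ q.val + 1 = p.val) := by
    intro p q hc
    rw [hspec p q, hspec q p] at hc
    have hp := p.isLt
    have hq := q.isLt
    rcases lt_trichotomy p.val q.val with h1 | h1 | h1
    · have := nochord p.val q.val h1 (by omega) hc
      omega
    · exact Or.inl h1
    · have := nochord q.val p.val h1 (by omega) (Or.symm hc)
      omega
  have hchainC : ∀ p q : Fin (n+1), q.val = p.val + 1 →
      (specLE tC' p q ∨ specLE tC' q p) := by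
    intro p q hpq
    rw [hspec p q, hspec q p]
    have hq := q.isLt
    rw [hpq]
    exact hch p.val (by omega)
  have hc0 : 0 < n + 1 := by omega
  set c0' : Fin (n+1) := ⟨0, hc0⟩ with hc0'
  set c1' : Fin (n+1) := ⟨n, by omega⟩ with hc1'
  -- connectedness
  haveI hconn' : @ConnectedSpace (Fin (n+1)) tC' := by
    have H : ∀ k (hk : k ≤ n), (⟨k, by omega⟩ : Fin (n+1)) ∈ connectedComponent c0' := by
      intro k
      induction k with
      | zero => intro _; exact mem_connectedComponent
      | succ k ih =>
        intro hk1
        have ihm := ih (by omega)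
        have step : (⟨k+1, by omega⟩ : Fin (n+1)) ∈
            connectedComponent (⟨k, by omega⟩ : Fin (n+1)) :=
          mem_connectedComponent_of_cmp (hchainC _ _ rfl)
        rw [connectedComponent_eq ihm]
        exact step
    have huniv : connectedComponent c0' = univ := by
      apply eq_univ_of_forall
      intro p
      exact H p.val (by omega)
    exact { toNonempty := ⟨c0'⟩, isPreconnected_univ := huniv ▸ isPreconnected_connectedComponent }
  -- separation
  have hsep : ∀ p q r : Fin (n+1), p < q → q < r →
      connectedComponentIn ({q}ᶜ : Set (Fin (n+1))) p ≠
        connectedComponentIn ({q}ᶜ : Set (Fin (n+1))) r := by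
    intro p q r hpq hqr
    have hpF : p ∈ ({q}ᶜ : Set (Fin (n+1))) := Fin.ne_of_lt hpq
    have hrF : r ∈ ({q}ᶜ : Set (Fin (n+1))) := (Fin.ne_of_lt hqr).symm
    set F : Set (Fin (n+1)) := {q}ᶜ with hF
    set C0 : Set ↥F := {z | z.val < q} with hC0
    have hclopen : IsClopen C0 := by
      apply isClopen_of_cmp_closed
      intro x hx y hcmp
      have hcmp' : specLE tC' x.val y.val ∨ specLE tC' y.val x.val := by
        rcases hcmp with hh | hh
        · exact Or.inl ((specLE_induced Subtype.val x y).mp hh)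
        · exact Or.inr ((specLE_induced Subtype.val y x).mp hh)
      have hk := hkey x.val y.val hcmp'
      have hxq : x.val ≠ q := x.property
      have hyq : y.val ≠ q := y.property
      have hx' : (x.val : Fin (n+1)).val < q.val := hx
      show (y.val : Fin (n+1)).val < q.val
      have h2 : (x.val : Fin (n+1)).val ≠ q.val := fun he => hxq (Fin.ext he)
      have h3 : (y.val : Fin (n+1)).val ≠ q.val := fun he => hyq (Fin.ext he)
      omega
    intro heq
    have h1 : connectedComponentIn F p = Subtype.val '' connectedComponent (⟨p, hpF⟩ : ↥F) :=
      connectedComponentIn_eq_image hpF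
    have hrmem : r ∈ connectedComponentIn F r := mem_connectedComponentIn hrF
    rw [← heq, h1] at hrmem
    obtain ⟨z, hz, hzr⟩ := hrmem
    have hzC0 : z ∈ C0 :=
      hclopen.connectedComponent_subset (show (⟨p, hpF⟩ : ↥F) ∈ C0 from hpq) hz
    have : z.val < q := hzC0
    rw [hzr] at this
    exact absurd this (not_lt.mpr (le_of_lt hqr))
  have hsepmain : ∀ Y3 : Set (Fin (n+1)), Y3.ncard = 3 →
      ∃ y ∈ Y3, ∃ aa ∈ Y3 \ {y}, ∃ bb ∈ Y3 \ {y},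
        connectedComponentIn ({y}ᶜ : Set (Fin (n+1))) aa ≠
          connectedComponentIn ({y}ᶜ : Set (Fin (n+1))) bb := by
    intro Y3 h3
    obtain ⟨x, y, z, hxy, hxz, hyz, rfl⟩ := Set.ncard_eq_three.mp h3
    obtain ⟨p, q, r, hpq, hqr, hset⟩ : ∃ p q r : Fin (n+1), p < q ∧ q < r ∧
        ({x, y, z} : Set (Fin (n+1))) = {p, q, r} := by
      rcases lt_trichotomy x y with h1 | h1 | h1
      · rcases lt_trichotomy y z with h2 | h2 | h2
        · exact ⟨x, y, z, h1, h2, rfl⟩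
        · exact absurd h2 hyz
        · rcases lt_trichotomy x z with h3' | h3' | h3'
          · exact ⟨x, z, y, h3', h2, by ext t; simp; tauto⟩
          · exact absurd h3' hxz
          · exact ⟨z, x, y, h3', h1, by ext t; simp; tauto⟩
      · exact absurd h1 hxy
      · rcases lt_trichotomy x z with h2 | h2 | h2
        · exact ⟨y, x, z, h1, h2, by ext t; simp; tauto⟩
        · exact absurd h2 hxz
        · rcases lt_trichotomy y z with h3' | h3' | h3'
          · exact ⟨y, z, x, h3', h2, by ext t; simp; tauto⟩
          · exact absurd h3' hyz
          · exact ⟨z, y, x, h3', h1, by ext t; simp; tauto⟩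
    rw [hset]
    refine ⟨q, by simp, p, ⟨by simp, by simp [Fin.ne_of_lt hpq]⟩,
      r, ⟨by simp, by simp [(Fin.ne_of_lt hqr).symm]⟩, hsep p q r hpq hqr⟩
  -- endpoints
  have hend0 : IsEndpoint tC' c0' := by
    have hss : (adjSet tC' c0').Subsingleton := by
      intro u hu v hv
      obtain ⟨hneu, hcmpu⟩ := hu
      obtain ⟨hnev, hcmpv⟩ := hv
      have hku := hkey c0' u hcmpu
      have hkv := hkey c0' v hcmpv
      have h0 : c0'.val = 0 := rfl
      have hu0 : u.val ≠ 0 := fun hh => hneu (Fin.ext (by omega))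
      have hv0 : v.val ≠ 0 := fun hh => hnev (Fin.ext (by omega))
      exact Fin.ext (by omega)
    rcases hss.eq_empty_or_singleton with hh | ⟨x, hh⟩
    · rw [IsEndpoint, hh]; simp
    · rw [IsEndpoint, hh]; simp
  have hend1 : IsEndpoint tC' c1' := by
    have hss : (adjSet tC' c1').Subsingleton := by
      intro u hu v hv
      obtain ⟨hneu, hcmpu⟩ := hu
      obtain ⟨hnev, hcmpv⟩ := hv
      have hku := hkey c1' u hcmpu
      have hkv := hkey c1' v hcmpv
      have h0 : c1'.val = n := rfl
      have hun : u.val ≠ n := fun hh => hneu (Fin.ext (by omega))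
      have hvn : v.val ≠ n := fun hh => hnev (Fin.ext (by omega))
      have hu' := u.isLt
      have hv' := v.isLt
      exact Fin.ext (by omega)
    rcases hss.eq_empty_or_singleton with hh | ⟨x, hh⟩
    · rw [IsEndpoint, hh]; simp
    · rw [IsEndpoint, hh]; simp
  -- embedding
  have hinj : Function.Injective g := by
    intro p q hpq
    have hp := p.isLt
    have hq := q.isLt
    exact Fin.ext (nodup p.val q.val (by omega) (by omega) hpq)
  have hemb : @Topology.IsEmbedding (Fin (n+1)) Y tC' tY g :=
    @Topology.IsEmbedding.mk _ _ tC' tY g ⟨htC'⟩ hinj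
  have hsubP : Set.range g ⊆ P := by
    rintro _ ⟨p, rfl⟩
    exact hm p.val (by have := p.isLt; omega)
  refine ⟨Set.range g, hsubP, ⟨Fin (n+1), tC', inferInstance, ⟨hconn', hsepmain⟩,
    g, hemb, rfl, c0', c1', hend0, hend1, ?_, ?_⟩, ?_⟩
  · rw [hg]; exact hw0
  · rw [hg]; exact hwn
  · exact Set.ncard_le_ncard hsubP P.toFinite
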